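/- For any real numbers λ₂ ≤ λ₁ < 0 and any ρ > 0, there exists a real 2×2 matrix A such that trace(A) = λ₁ + λ₂, det(A) = λ₁·λ₂ (so that λ₁ and λ₂ are the eigenvalues of A), and the supremum over all Euclidean unit vectors v ∈ ℝ² of ⟨A · v, v⟩ equals ρ (i.e. A has reactivity ρ). In particular, a reactive attractor with eigenvalues λ₁, λ₂ can have arbitrarily large reactivity. -/

import Mathlib

open Real Matrix

theorem stmt_15 (lam1 lam2 ρ : ℝ) (hle : lam2 ≤ lam1) (hneg : lam1 < 0) (hρ : 0 < ρ) :
    ∃ A : Matrix (Fin 2) (Fin 2) ℝ,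
      A.trace = lam1 + lam2 ∧ A.det = lam1 * lam2 ∧
      IsGreatest {x : ℝ | ∃ v : Fin 2 → ℝ, v 0 ^ 2 + v 1 ^ 2 = 1 ∧ x = A.mulVec v ⬝ᵥ v} ρ := by
  set s := Real.sqrt (ρ - lam1) with hs_def
  set t := Real.sqrt (ρ - lam2) with ht_def
  have ha : (0:ℝ) < ρ - lam1 := by linarith
  have hb : (0:ℝ) < ρ - lam2 := by linarith
  have hs : s ^ 2 = ρ - lam1 := Real.sq_sqrt ha.le
  have ht : t ^ 2 = ρ - lam2 := Real.sq_sqrt hb.le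
  have hspos : 0 < s := Real.sqrt_pos.mpr ha
  have htpos : 0 < t := Real.sqrt_pos.mpr hb
  set u := Real.sqrt (s ^ 2 + t ^ 2) with hu_def
  have hupos : 0 < u := Real.sqrt_pos.mpr (by positivity)
  have hu : u ^ 2 = s ^ 2 + t ^ 2 := Real.sq_sqrt (by positivity)
  refine ⟨!![lam1, 2 * s * t; 0, lam2], ?_, ?_, ?_, ?_⟩
  · simp [Matrix.trace_fin_two]
  · simp [Matrix.det_fin_two]
  · refine ⟨![t / u, s / u], ?_, ?_⟩
    · field_simp
      simp
      field_simp
      linarith [hu]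
    · have hq : Matrix.mulVec !![lam1, 2 * s * t; 0, lam2] ![t / u, s / u] ⬝ᵥ ![t / u, s / u]
          = (lam1 * t ^ 2 + 2 * s ^ 2 * t ^ 2 + lam2 * s ^ 2) / u ^ 2 := by
        simp [Matrix.mulVec, dotProduct, Fin.sum_univ_two]
        field_simp
      rw [hq, hu, hs, ht]
      field_simp
      ring
  · rintro x ⟨v, hv, rfl⟩
    have hq : Matrix.mulVec !![lam1, 2 * s * t; 0, lam2] v ⬝ᵥ v
        = lam1 * v 0 ^ 2 + 2 * s * t * (v 0 * v 1) + lam2 * v 1 ^ 2 := by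
      simp [Matrix.mulVec, dotProduct, Fin.sum_univ_two]
      ring
    rw [hq]
    nlinarith [sq_nonneg (s * v 0 - t * v 1)]
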